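/- Let t ≥ 1 be an integer and n ≥ 2t+2 be an even integer. Consider the binary words x1 = 0^{n/2−1} 1 0^{n/2} and x2 = 0^{n/2} 1 0^{n/2−1}, and let M = C(n,t) − C(n/2−1, ⌊t/2⌋)·C(n/2−1, ⌈t/2⌉). Then: (1) there exist sets D1 and D2 of deletion vectors for length-n words, each vector of weight exactly t, with |D1| = |D2| = M, such that the output multiset of D1 on x1 equals the output multiset of D2 on x2; and (2) for any such pair of sets of weight-exactly-t deletion vectors with equal output multisets on x1 and x2, |D1| ≤ M. In other words, exactly M + 1 channels are enough to distinguish x1 from x2 in the multiset model with exactly t deletions per channel. -/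

import Mathlib

/-- Applying a deletion vector `S` (a set of coordinate positions) to a word
`x` of length `n`: delete the entries at positions in `S`, keeping the rest in order. -/
def delWord {q n : ℕ} (x : Fin n → Fin q) (S : Finset (Fin n)) : List (Fin q) :=
  ((Finset.univ \ S).sort (· ≤ ·)).map x

open Finset

namespace HalfwayAux

/-- canonical word with a single 1 at position `c` (if `c < m`), else a marker. -/
def wordOf (m c : ℕ) : List (Fin 2) :=
  if c < m then (List.range m).map (fun j => if j = c then 1 else 0)
  else List.replicate c 0

lemma one_mem_wordOf {m c : ℕ} (h : c < m) : (1 : Fin 2) ∈ wordOf m c := by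
  unfold wordOf; rw [if_pos h]
  exact List.mem_map.2 ⟨c, List.mem_range.2 h, by simp⟩

lemma wordOf_injective (m : ℕ) : Function.Injective (wordOf m) := by
  intro c c' h
  by_cases hc : c < m <;> by_cases hc' : c' < m
  · by_contra hne
    unfold wordOf at h
    rw [if_pos hc, if_pos hc'] at h
    have := congrArg (fun l => l[c]?) h
    simp only [List.getElem?_map, List.getElem?_range, hc, hc'] at this
    simp [hne] at this
  · exfalso
    have h1 := one_mem_wordOf hc
    rw [h] at h1
    unfold wordOf at h1
    rw [if_neg hc'] at h1
    have := List.eq_of_mem_replicate h1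
    exact absurd this (by decide)
  · exfalso
    have h1 := one_mem_wordOf hc'
    rw [← h] at h1
    unfold wordOf at h1
    rw [if_neg hc] at h1
    have := List.eq_of_mem_replicate h1
    exact absurd this (by decide)
  · have := congrArg List.length h
    unfold wordOf at this
    rw [if_neg hc, if_neg hc'] at this
    simpa using this


lemma card_filter_contains (t : ℕ) (ht : 1 ≤ t) (a : Fin n) :
    #((powersetCard t (univ : Finset (Fin n))).filter (fun S => a ∈ S))
      = (n - 1).choose (t - 1) := by
  have : #((powersetCard t (univ : Finset (Fin n))).filter (fun S => a ∈ S))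
      = #(powersetCard (t - 1) ((univ : Finset (Fin n)).erase a)) := by
    refine Finset.card_bij' (fun S _ => S.erase a) (fun T _ => insert a T) ?_ ?_ ?_ ?_
    · intro S hS
      rw [mem_filter, mem_powersetCard] at hS
      rw [mem_powersetCard]
      exact ⟨fun x hx => by
        rw [mem_erase] at hx ⊢
        exact ⟨hx.1, mem_univ _⟩,
        by rw [card_erase_of_mem hS.2, hS.1.2]⟩
    · intro T hT
      rw [mem_powersetCard] at hT
      have haT : a ∉ T := fun h => (mem_erase.1 (hT.1 h)).1 rfl
      rw [mem_filter, mem_powersetCard]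
      refine ⟨⟨subset_univ _, ?_⟩, mem_insert_self _ _⟩
      rw [card_insert_of_notMem haT, hT.2]
      omega
    · intro S hS
      rw [mem_filter] at hS
      exact insert_erase hS.2
    · intro T hT
      rw [mem_powersetCard] at hT
      exact erase_insert (fun h => (mem_erase.1 (hT.1 h)).1 rfl)
  rw [this, card_powersetCard, card_erase_of_mem (mem_univ a), card_univ, Fintype.card_fin]

lemma filter_union_lt_gt {a : Fin n} (L U : Finset (Fin n))
    (hL : L ⊆ Iio a) (hU : U ⊆ Ioi a) :
    (L ∪ U).filter (fun i => i < a) = L ∧ (L ∪ U).filter (fun i => a < i) = U := by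
  constructor
  · rw [filter_union, filter_true_of_mem (fun x hx => mem_Iio.1 (hL hx)),
      filter_false_of_mem (fun x hx => asymm (mem_Ioi.1 (hU hx))), union_empty]
  · rw [filter_union, filter_false_of_mem (fun x hx => asymm (mem_Iio.1 (hL hx))),
      filter_true_of_mem (fun x hx => mem_Ioi.1 (hU hx)), empty_union]

lemma card_filter_below (t s : ℕ) (hst : s ≤ t) (a : Fin n) :
    #((powersetCard t (univ : Finset (Fin n))).filter
        (fun S => a ∉ S ∧ #(S.filter (fun i => i < a)) = s))
      = (a : ℕ).choose s * (n - 1 - a).choose (t - s) := by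
  have : #((powersetCard t (univ : Finset (Fin n))).filter
        (fun S => a ∉ S ∧ #(S.filter (fun i => i < a)) = s))
      = #((powersetCard s (Iio a)) ×ˢ (powersetCard (t - s) (Ioi a))) := by
    refine Finset.card_bij' (fun S _ => (S.filter (fun i => i < a), S.filter (fun i => a < i)))
      (fun P _ => P.1 ∪ P.2) ?_ ?_ ?_ ?_
    · intro S hS
      rw [mem_filter, mem_powersetCard] at hS
      obtain ⟨⟨-, hcard⟩, haS, hlow⟩ := hS
      rw [mem_product, mem_powersetCard, mem_powersetCard]
      have hsplit : S.filter (fun i => i < a) ∪ S.filter (fun i => a < i) = S := by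
        rw [← filter_or]
        apply filter_true_of_mem
        intro x hx
        exact lt_or_gt_of_ne (fun h : x = a => haS (h ▸ hx))
      have hdisj : Disjoint (S.filter (fun i => i < a)) (S.filter (fun i => a < i)) :=
        disjoint_left.2 (fun x hx1 hx2 => by
          rw [mem_filter] at hx1 hx2
          exact absurd hx2.2 (asymm hx1.2))
      have hcards : #(S.filter (fun i => i < a)) + #(S.filter (fun i => a < i)) = t := by
        rw [← card_union_of_disjoint hdisj, hsplit, hcard]
      refine ⟨⟨fun x hx => mem_Iio.2 (mem_filter.1 hx).2, hlow⟩,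
        ⟨fun x hx => mem_Ioi.2 (mem_filter.1 hx).2, ?_⟩⟩
      show #(S.filter (fun i => a < i)) = t - s
      omega
    · intro P hP
      rw [mem_product, mem_powersetCard, mem_powersetCard] at hP
      obtain ⟨⟨hL, hLc⟩, hU, hUc⟩ := hP
      have hdisj : Disjoint P.1 P.2 := disjoint_left.2 (fun x hx1 hx2 =>
        absurd (mem_Ioi.1 (hU hx2)) (asymm (mem_Iio.1 (hL hx1))))
      rw [mem_filter, mem_powersetCard]
      refine ⟨⟨subset_univ _, ?_⟩, ?_, ?_⟩
      · rw [card_union_of_disjoint hdisj, hLc, hUc]; omega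
      · intro h
        rcases mem_union.1 h with h | h
        · exact absurd (mem_Iio.1 (hL h)) (lt_irrefl a)
        · exact absurd (mem_Ioi.1 (hU h)) (lt_irrefl a)
      · rw [(filter_union_lt_gt P.1 P.2 hL hU).1, hLc]
    · intro S hS
      rw [mem_filter, mem_powersetCard] at hS
      show S.filter (fun i => i < a) ∪ S.filter (fun i => a < i) = S
      rw [← filter_or]
      apply filter_true_of_mem
      intro x hx
      exact lt_or_gt_of_ne (fun h : x = a => hS.2.1 (h ▸ hx))
    · intro P hP
      rw [mem_product, mem_powersetCard, mem_powersetCard] at hP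
      obtain ⟨⟨hL, hLc⟩, hU, hUc⟩ := hP
      have h2 := filter_union_lt_gt P.1 P.2 hL hU
      show ((P.1 ∪ P.2).filter (fun i => i < a), (P.1 ∪ P.2).filter (fun i => a < i)) = P
      exact Prod.ext h2.1 h2.2
  rw [this, card_product, card_powersetCard, card_powersetCard, Fin.card_Iio, Fin.card_Ioi]


end HalfwayAux
namespace HalfwayAux

variable {n : ℕ}

/-- number of surviving positions strictly below `a`: the output index of position `a`. -/
def idxa (a : Fin n) (S : Finset (Fin n)) : ℕ :=
  #((univ \ S).filter (fun i => i < a))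

/-- classification of a deletion set `S` w.r.t. the single 1 at position `a`:
the output position of the 1, or the sentinel `n - t` if the 1 was deleted. -/
def fA (t : ℕ) (a : Fin n) (S : Finset (Fin n)) : ℕ :=
  if a ∈ S then n - t else idxa a S

lemma length_filter_lt_get : ∀ (l : List (Fin n)), l.Pairwise (· < ·) →
    ∀ (j : ℕ) (h : j < l.length),
      (l.filter (fun b => b < l.get ⟨j, h⟩)).length = j := by
  intro l hl
  induction l with
  | nil => intro j h; simp at h
  | cons b l ih =>
    rw [List.pairwise_cons] at hl
    intro j h
    cases j with
    | zero =>
      simp only [List.get]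
      rw [List.filter_cons, if_neg (by simp)]
      rw [List.filter_eq_nil_iff.2 (fun y hy => by
        simp only [decide_eq_true_eq]
        exact fun hlt => absurd (hl.1 y hy) (asymm hlt))]
      simp
    | succ j =>
      have hj : j < l.length := by simpa using h
      have hget : (b :: l).get ⟨j + 1, h⟩ = l.get ⟨j, hj⟩ := rfl
      have hb : b < l.get ⟨j, hj⟩ := hl.1 _ (l.get_mem _)
      rw [hget, List.filter_cons, if_pos (by simpa using hb)]
      rw [List.length_cons, ih hl.2 j hj]

lemma idxa_eq_filter_sort (a : Fin n) (S : Finset (Fin n)) :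
    idxa a S = (((univ \ S).sort (· ≤ ·)).filter (fun b => b < a)).length := by
  have h := Finset.sort_eq (univ \ S) (· ≤ ·)
  calc idxa a S = Multiset.card (Multiset.filter (fun i => i < a) (univ \ S).1) := rfl
    _ = Multiset.card (Multiset.filter (fun i => i < a)
          (((univ \ S).sort (· ≤ ·) : List (Fin n)) : Multiset (Fin n))) := by rw [h]
    _ = _ := by rw [Multiset.filter_coe]; simp

end HalfwayAux

namespace HalfwayAux2
open HalfwayAux

variable {n : ℕ}

lemma card_compl {t : ℕ} {S : Finset (Fin n)} (hS : S.card = t) :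
    #(Finset.univ \ S) = n - t := by
  rw [card_sdiff_of_subset (subset_univ S), card_univ, Fintype.card_fin, hS]

lemma idxa_lt {t : ℕ} {a : Fin n} {S : Finset (Fin n)} (hS : S.card = t) (ha : a ∉ S) :
    idxa a S < n - t := by
  have hsub : (univ \ S).filter (fun i => i < a) ⊂ univ \ S := by
    refine Finset.ssubset_iff_of_subset (filter_subset _ _) |>.2 ⟨a, ?_, ?_⟩
    · simp [ha]
    · simp
  have := Finset.card_lt_card hsub
  rwa [card_compl hS] at this

lemma delWord_single {t : ℕ} (a : Fin n) (S : Finset (Fin n)) (hS : S.card = t) :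
    delWord (fun i => if i = a then (1 : Fin 2) else 0) S = wordOf (n - t) (fA t a S) := by
  unfold delWord
  set l := (Finset.univ \ S).sort (· ≤ ·) with hldef
  have hlen : l.length = n - t := by rw [Finset.length_sort, card_compl hS]
  by_cases ha : a ∈ S
  · rw [show fA t a S = n - t from if_pos ha]
    unfold wordOf
    rw [if_neg (lt_irrefl _)]
    refine List.eq_replicate_iff.2 ⟨by simp [hlen], ?_⟩
    intro b hb
    obtain ⟨i, hi, rfl⟩ := List.mem_map.1 hb
    have : i ∈ Finset.univ \ S := (Finset.mem_sort _).1 hi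
    have hne : i ≠ a := by
      intro h; subst h; simp at this; exact this ha
    simp [hne]
  · rw [show fA t a S = idxa a S from if_neg ha]
    have hidx : idxa a S < n - t := idxa_lt hS ha
    unfold wordOf
    rw [if_pos hidx]
    have hsorted : l.Pairwise (· < ·) :=
      ((Finset.pairwise_sort _ (· ≤ ·)).and (Finset.sort_nodup _ _)).imp
        (fun h => lt_of_le_of_ne h.1 h.2)
    have hnodup : l.Nodup := Finset.sort_nodup _ _
    have hmem : a ∈ l := (Finset.mem_sort _).2 (by simp [ha])
    obtain ⟨j0, hj0⟩ := List.mem_iff_get.1 hmem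
    have hj0val : (j0 : ℕ) = idxa a S := by
      have := length_filter_lt_get l hsorted j0 j0.isLt
      rw [idxa_eq_filter_sort, ← hldef]
      rw [show l.get ⟨(j0 : ℕ), j0.isLt⟩ = a from by
        simpa using hj0] at this
      omega
    apply List.ext_getElem (by simp [hlen])
    intro i h1 h2
    have hil : i < l.length := by simpa using h1
    rw [List.getElem_map, List.getElem_map, List.getElem_range]
    have hiff : l[i]'hil = a ↔ i = idxa a S := by
      constructor
      · intro h
        have : l.get ⟨i, by omega⟩ = l.get j0 := by
          rw [hj0]; simpa using h
        have := (List.Nodup.get_inj_iff hnodup).1 this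
        have := congrArg Fin.val this
        simpa [hj0val] using this
      · intro h
        have : (⟨i, by omega⟩ : Fin l.length) = j0 := by
          apply Fin.ext; simpa [hj0val] using h
        rw [← hj0, ← this]
        simp [List.get_eq_getElem]
    by_cases hca : l[i]'hil = a
    · rw [if_pos hca, if_pos (hiff.1 hca)]
    · rw [if_neg hca, if_neg (fun h => hca (hiff.2 h))]

end HalfwayAux2

namespace HalfwayAux3
open HalfwayAux HalfwayAux2 Finset

variable {n : ℕ}

/-- number of weight-`t` deletion sets with classification `c`. -/
def NN (t : ℕ) (a : Fin n) (c : ℕ) : ℕ :=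
  #((powersetCard t (univ : Finset (Fin n))).filter (fun S => fA t a S = c))

lemma idxa_add (a : Fin n) (S : Finset (Fin n)) :
    idxa a S + #(S.filter (fun i => i < a)) = (a : ℕ) := by
  have hdisj : Disjoint ((univ \ S).filter (fun i => i < a)) (S.filter (fun i => i < a)) :=
    Finset.disjoint_filter_filter sdiff_disjoint
  have hunion : ((univ \ S).filter (fun i => i < a)) ∪ (S.filter (fun i => i < a))
      = univ.filter (fun i => i < a) := by
    rw [← filter_union, sdiff_union_of_subset (subset_univ S)]
  have : univ.filter (fun i => (i : Fin n) < a) = Iio a := by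
    ext x; simp
  rw [idxa, ← card_union_of_disjoint hdisj, hunion, this, Fin.card_Iio]

lemma fA_le {t : ℕ} {a : Fin n} {S : Finset (Fin n)} (hS : #S = t) :
    fA t a S ≤ n - t := by
  unfold fA
  split
  · exact le_refl _
  · exact (idxa_lt hS (by assumption)).le

lemma NN_sent {t : ℕ} (ht : 1 ≤ t) (a : Fin n) :
    NN t a (n - t) = (n - 1).choose (t - 1) := by
  rw [NN, ← card_filter_contains t ht a]
  congr 1
  apply filter_congr
  intro S hS
  rw [mem_powersetCard] at hS
  constructor
  · intro h
    by_contra ha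
    rw [fA, if_neg ha] at h
    exact absurd h (idxa_lt hS.2 ha).ne
  · intro h
    simp only [fA, if_pos h]

lemma NN_zero_hi {t : ℕ} (a : Fin n) (c : ℕ) (hc : (a : ℕ) < c) (hcn : c < n - t) :
    NN t a c = 0 := by
  rw [NN, card_eq_zero, filter_eq_empty_iff]
  intro S hS
  rw [mem_powersetCard] at hS
  intro h
  rcases Decidable.em (a ∈ S) with ha | ha
  · rw [fA, if_pos ha] at h; omega
  · rw [fA, if_neg ha] at h
    have := idxa_add a S
    omega

lemma NN_zero_lo {t : ℕ} (a : Fin n) (c : ℕ) (hc : c + t < (a : ℕ)) :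
    NN t a c = 0 := by
  rw [NN, card_eq_zero, filter_eq_empty_iff]
  intro S hS
  rw [mem_powersetCard] at hS
  intro h
  have han : (a : ℕ) < n := a.isLt
  rcases Decidable.em (a ∈ S) with ha | ha
  · rw [fA, if_pos ha] at h; omega
  · rw [fA, if_neg ha] at h
    have h1 := idxa_add a S
    have h2 : #(S.filter (fun i => i < a)) ≤ t := hS.2 ▸ card_filter_le S _
    omega

lemma NN_eq {t : ℕ} (a : Fin n) (c : ℕ) (hca : c ≤ (a : ℕ)) (hat : (a : ℕ) ≤ c + t)
    (hcn : c < n - t) :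
    NN t a c = (a : ℕ).choose ((a : ℕ) - c) * (n - 1 - a).choose (t - ((a : ℕ) - c)) := by
  rw [NN, ← card_filter_below t ((a : ℕ) - c) (by omega) a]
  congr 1
  apply filter_congr
  intro S hS
  rw [mem_powersetCard] at hS
  have h2 : #(S.filter (fun i => i < a)) ≤ t := hS.2 ▸ card_filter_le S _
  have h1 := idxa_add a S
  constructor
  · intro h
    rcases Decidable.em (a ∈ S) with ha | ha
    · rw [fA, if_pos ha] at h; omega
    · rw [fA, if_neg ha] at h
      exact ⟨ha, by omega⟩
  · intro ⟨ha, hf⟩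
    rw [fA, if_neg ha]
    omega

end HalfwayAux3

namespace HalfwayArith
open Finset

/-- `N1` reindexed: number of weight-`t` sets avoiding position `p-1` with `k` deletions below. -/
def AA (p t k : ℕ) : ℕ := (p - 1).choose k * p.choose (t - k)
def BB (p t k : ℕ) : ℕ := p.choose k * (p - 1).choose (t - k)
def gg (p t k : ℕ) : ℕ := (p - 1).choose k * (p - 1).choose (t - k)

lemma ratio (p t k : ℕ) (hp : 1 ≤ p) (hk : k < t) :
    (k + 1) * BB p t (k + 1) = (t - k) * AA p t k := by
  have e1 : p * (p - 1).choose k = p.choose (k + 1) * (k + 1) := by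
    have := Nat.add_one_mul_choose_eq (p - 1) k
    rwa [show p - 1 + 1 = p from by omega] at this
  have e2 : p * (p - 1).choose (t - k - 1) = p.choose (t - k) * (t - k) := by
    have := Nat.add_one_mul_choose_eq (p - 1) (t - k - 1)
    rw [show p - 1 + 1 = p from by omega, show t - k - 1 + 1 = t - k from by omega] at this
    exact this
  apply Nat.eq_of_mul_eq_mul_left (show 0 < p by omega)
  unfold AA BB
  rw [show t - (k + 1) = t - k - 1 by omega]
  calc p * ((k + 1) * (p.choose (k + 1) * (p - 1).choose (t - k - 1)))
      = (p.choose (k + 1) * (k + 1)) * (p - 1).choose (t - k - 1) * p := by ring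
    _ = (p * (p - 1).choose k) * (p - 1).choose (t - k - 1) * p := by rw [e1]
    _ = (p * (p - 1).choose (t - k - 1)) * (p - 1).choose k * p := by ring
    _ = (p.choose (t - k) * (t - k)) * (p - 1).choose k * p := by rw [e2]
    _ = p * ((t - k) * ((p - 1).choose k * p.choose (t - k))) := by ring

lemma AA_le_BB (p t k : ℕ) (hp : 1 ≤ p) (hk : k < t) (h : k + 1 ≤ t - k) :
    AA p t k ≤ BB p t (k + 1) := by
  have h1 := ratio p t k hp hk
  have h2 : (k + 1) * AA p t k ≤ (t - k) * AA p t k :=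
    Nat.mul_le_mul_right _ h
  have : (k + 1) * AA p t k ≤ (k + 1) * BB p t (k + 1) := by omega
  exact Nat.le_of_mul_le_mul_left this (by omega)

lemma BB_le_AA (p t k : ℕ) (hp : 1 ≤ p) (hk : k < t) (h : t - k ≤ k + 1) :
    BB p t (k + 1) ≤ AA p t k := by
  have h1 := ratio p t k hp hk
  have h2 : (t - k) * AA p t k ≤ (k + 1) * AA p t k :=
    Nat.mul_le_mul_right _ h
  have : (k + 1) * BB p t (k + 1) ≤ (k + 1) * AA p t k := by omega
  exact Nat.le_of_mul_le_mul_left this (by omega)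

lemma pascalStep (p t k : ℕ) (hp : 1 ≤ p) (hk : k < t) :
    AA p t k + gg p t (k + 1) = BB p t (k + 1) + gg p t k := by
  have c1 : p.choose (t - k) = (p - 1).choose (t - k - 1) + (p - 1).choose (t - k) := by
    have := Nat.choose_succ_succ (p - 1) (t - k - 1)
    simp only [Nat.succ_eq_add_one] at this
    rw [show p - 1 + 1 = p from by omega, show t - k - 1 + 1 = t - k from by omega] at this
    exact this
  have c2 : p.choose (k + 1) = (p - 1).choose k + (p - 1).choose (k + 1) := by
    have := Nat.choose_succ_succ (p - 1) k
    simp only [Nat.succ_eq_add_one] at this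
    rw [show p - 1 + 1 = p from by omega] at this
    exact this
  unfold AA BB gg
  rw [c1, c2, show t - (k + 1) = t - k - 1 by omega]
  ring

lemma telescope (p t : ℕ) (hp : 1 ≤ p) :
    ∀ m, m ≤ t → (∑ k ∈ Ico (t - m) t, BB p t (k + 1)) + gg p t (t - m)
      = ∑ k ∈ Ico (t - m) (t + 1), AA p t k := by
  intro m
  induction m with
  | zero =>
    intro _
    simp only [Nat.sub_zero, Ico_self, sum_empty, zero_add]
    rw [show Ico t (t + 1) = {t} from by ext x; simp only [mem_Ico, mem_singleton]; omega, sum_singleton]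
    unfold AA gg
    simp
  | succ m ih =>
    intro hm
    have hlt : t - (m + 1) < t := by omega
    have he : t - (m + 1) + 1 = t - m := by omega
    rw [Finset.sum_eq_sum_Ico_succ_bot hlt, Finset.sum_eq_sum_Ico_succ_bot (by omega : t - (m+1) < t + 1), he]
    have hstep := pascalStep p t (t - (m + 1)) hp hlt
    rw [he] at hstep
    have hih := ih (by omega)
    -- goal : BB (t-m) + (∑ Ico (t-m) t BB (k+1)) + gg (t-(m+1)) = AA (t-(m+1)) + ∑ Ico (t-m) (t+1) AA
    omega

end HalfwayArith

namespace HalfwayArith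
open Finset

lemma keySum (p t : ℕ) (hp : 1 ≤ p) (ht : 1 ≤ t) :
    (∑ k ∈ range t, min (AA p t k) (BB p t (k + 1))) + gg p t ((t + 1) / 2)
      = (2 * p - 1).choose t := by
  set k0 := (t + 1) / 2 with hk0
  have hk0t : k0 ≤ t := by omega
  have h1 : ∑ k ∈ range t, min (AA p t k) (BB p t (k + 1))
      = (∑ k ∈ Ico 0 k0, AA p t k) + ∑ k ∈ Ico k0 t, BB p t (k + 1) := by
    rw [range_eq_Ico, ← Finset.sum_Ico_consecutive _ (Nat.zero_le k0) hk0t]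
    congr 1
    · apply sum_congr rfl
      intro k hk
      rw [mem_Ico] at hk
      exact min_eq_left (AA_le_BB p t k hp (by omega) (by omega))
    · apply sum_congr rfl
      intro k hk
      rw [mem_Ico] at hk
      exact min_eq_right (BB_le_AA p t k hp (by omega) (by omega))
  have h2 := telescope p t hp (t - k0) (by omega)
  rw [show t - (t - k0) = k0 from by omega] at h2
  rw [h1, add_assoc, h2, Finset.sum_Ico_consecutive _ (Nat.zero_le k0) (by omega : k0 ≤ t + 1)]
  rw [show (2 * p - 1) = (p - 1) + p from by omega, Nat.add_choose_eq,
    Finset.Nat.sum_antidiagonal_eq_sum_range_succ_mk]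
  rw [range_eq_Ico]
  apply sum_congr rfl
  intro k _
  rfl

end HalfwayArith

namespace HalfwayAux4
open Finset HalfwayAux HalfwayAux2 HalfwayAux3 HalfwayArith

lemma sumMin (n t : ℕ) (ht : 1 ≤ t) (hn : 2 * t + 2 ≤ n) (hev : Even n)
    (a1 a2 : Fin n) (ha1 : (a1 : ℕ) = n / 2 - 1) (ha2 : (a2 : ℕ) = n / 2) :
    ∑ c ∈ range (n - t + 1), min (NN t a1 c) (NN t a2 c)
      = n.choose t - (n / 2 - 1).choose (t / 2) * (n / 2 - 1).choose ((t + 1) / 2) := by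
  have hn2 : n = 2 * (n / 2) := by
    obtain ⟨r, hr⟩ := hev; omega
  set p := n / 2 with hpdef
  have hp : t + 1 ≤ p := by omega
  -- the support of the summand
  have hsub : insert (n - t) (Icc (p - t) (p - 1)) ⊆ range (n - t + 1) := by
    intro c hc
    rcases mem_insert.1 hc with rfl | hc
    · exact mem_range.2 (by omega)
    · rw [mem_Icc] at hc
      exact mem_range.2 (by omega)
  have hzero : ∀ c ∈ range (n - t + 1), c ∉ insert (n - t) (Icc (p - t) (p - 1)) →
      min (NN t a1 c) (NN t a2 c) = 0 := by
    intro c hc hc2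
    rw [mem_range] at hc
    rw [mem_insert, mem_Icc] at hc2
    push_neg at hc2
    rcases Nat.lt_or_ge c (p - t) with h | h
    · rw [NN_zero_lo a2 c (by omega)]
      exact Nat.min_eq_right (Nat.zero_le _)
    · have hcp : p - 1 < c := by omega
      rw [NN_zero_hi a1 c (by omega) (by omega)]
      exact Nat.min_eq_left (Nat.zero_le _)
  rw [← Finset.sum_subset hsub hzero]
  rw [sum_insert (by rw [mem_Icc]; omega)]
  have hsent : min (NN t a1 (n - t)) (NN t a2 (n - t)) = (n - 1).choose (t - 1) := by
    rw [NN_sent ht a1, NN_sent ht a2, min_self]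
  rw [hsent]
  have hres : ∑ c ∈ Icc (p - t) (p - 1), min (NN t a1 c) (NN t a2 c)
      = ∑ k ∈ range t, min (AA p t k) (BB p t (k + 1)) := by
    apply Finset.sum_nbij' (fun c => p - 1 - c) (fun k => p - 1 - k)
    · intro c hc
      rw [mem_Icc] at hc
      exact mem_range.2 (by omega)
    · intro k hk
      rw [mem_range] at hk
      rw [mem_Icc]
      omega
    · intro c hc
      rw [mem_Icc] at hc
      omega
    · intro k hk
      rw [mem_range] at hk
      omega
    · intro c hc
      rw [mem_Icc] at hc
      have h1 : NN t a1 c = AA p t (p - 1 - c) := by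
        rw [NN_eq a1 c (by omega) (by omega) (by omega), AA, ha1,
          show n - 1 - (p - 1) = p from by omega]
      have h2 : NN t a2 c = BB p t (p - 1 - c + 1) := by
        rw [NN_eq a2 c (by omega) (by omega) (by omega), BB, ha2,
          show n - 1 - p = p - 1 from by omega,
          show p - c = p - 1 - c + 1 from by omega]
      rw [h1, h2]
  rw [hres]
  have hkey := keySum p t (by omega) ht
  have hpascal : n.choose t = (n - 1).choose (t - 1) + (n - 1).choose t := by
    have := Nat.choose_succ_succ (n - 1) (t - 1)
    simp only [Nat.succ_eq_add_one] at this
    rw [show n - 1 + 1 = n from by omega, show t - 1 + 1 = t from by omega] at this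
    exact this
  have hg : gg p t ((t + 1) / 2)
      = (p - 1).choose (t / 2) * (p - 1).choose ((t + 1) / 2) := by
    rw [gg, show t - (t + 1) / 2 = t / 2 from by omega, Nat.mul_comm]
  have h21 : (2 * p - 1).choose t = (n - 1).choose t := by
    rw [show 2 * p - 1 = n - 1 from by omega]
  omega

end HalfwayAux4

namespace HalfwayAux5
open Finset HalfwayAux HalfwayAux2 HalfwayAux3 HalfwayArith HalfwayAux4

variable {n : ℕ}

lemma count_map_fiber (D : Finset (Finset (Fin n))) (f : Finset (Fin n) → ℕ) (c : ℕ) :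
    Multiset.count c (Multiset.map f D.val) = #(D.filter (fun S => f S = c)) := by
  rw [Multiset.count_map]
  have : Multiset.filter (fun S => c = f S) D.val
      = Multiset.filter (fun S => f S = c) D.val :=
    Multiset.filter_congr (fun x _ => eq_comm)
  rw [this]
  rfl

end HalfwayAux5

open HalfwayAux HalfwayAux2 HalfwayAux3 HalfwayArith HalfwayAux4 HalfwayAux5 in
/-- For even `n ≥ 2t+2`, `x1 = 0^{n/2-1} 1 0^{n/2}` (single `1` at 0-indexed position `n/2 - 1`)
and `x2 = 0^{n/2} 1 0^{n/2-1}` (single `1` at position `n/2`), with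
`M = C(n,t) - C(n/2-1,⌊t/2⌋)·C(n/2-1,⌈t/2⌉)`: exactly `M` channels with distinct deletion
vectors of weight exactly `t` can produce equal output multisets from `x1` and `x2`,
so exactly `M + 1` channels distinguish them in the multiset model. -/
theorem multiset_model_exact_channel_number_halfway
    (t n : ℕ) (ht : 1 ≤ t) (hn : 2 * t + 2 ≤ n) (heven : Even n) :
    let x1 : Fin n → Fin 2 := fun i => if (i : ℕ) = n / 2 - 1 then 1 else 0
    let x2 : Fin n → Fin 2 := fun i => if (i : ℕ) = n / 2 then 1 else 0
    let M := n.choose t - (n / 2 - 1).choose (t / 2) * (n / 2 - 1).choose ((t + 1) / 2)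
    (∃ D1 D2 : Finset (Finset (Fin n)),
      (∀ S ∈ D1, S.card = t) ∧ (∀ S ∈ D2, S.card = t) ∧
      D1.card = M ∧ D2.card = M ∧
      Multiset.map (delWord x1) D1.val = Multiset.map (delWord x2) D2.val) ∧
    (∀ D1 D2 : Finset (Finset (Fin n)),
      (∀ S ∈ D1, S.card = t) → (∀ S ∈ D2, S.card = t) →
      D1.card = D2.card →
      Multiset.map (delWord x1) D1.val = Multiset.map (delWord x2) D2.val →
      D1.card ≤ M) := by
  intro x1 x2 M
  have hn2 : n = 2 * (n / 2) := by obtain ⟨r, hr⟩ := heven; omega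
  have hp : t + 1 ≤ n / 2 := by omega
  have ha1lt : n / 2 - 1 < n := by omega
  have ha2lt : n / 2 < n := by omega
  let a1 : Fin n := ⟨n / 2 - 1, ha1lt⟩
  let a2 : Fin n := ⟨n / 2, ha2lt⟩
  have hx1 : x1 = fun i => if i = a1 then 1 else 0 := by
    funext i
    show (if (i : ℕ) = n / 2 - 1 then (1 : Fin 2) else 0) = _
    have h : ((i : ℕ) = n / 2 - 1) ↔ (i = a1) :=
      ⟨fun hh => Fin.ext hh, fun hh => congrArg Fin.val hh⟩
    exact if_congr h rfl rfl
  have hx2 : x2 = fun i => if i = a2 then 1 else 0 := by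
    funext i
    show (if (i : ℕ) = n / 2 then (1 : Fin 2) else 0) = _
    have h : ((i : ℕ) = n / 2) ↔ (i = a2) :=
      ⟨fun hh => Fin.ext hh, fun hh => congrArg Fin.val hh⟩
    exact if_congr h rfl rfl
  have hconv : ∀ (a : Fin n) (D : Finset (Finset (Fin n))), (∀ S ∈ D, S.card = t) →
      Multiset.map (delWord (fun i => if i = a then (1 : Fin 2) else 0)) D.val
        = Multiset.map (wordOf (n - t)) (Multiset.map (fA t a) D.val) := by
    intro a D hD
    rw [Multiset.map_map]
    apply Multiset.map_congr rfl
    intro S hS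
    exact delWord_single a S (hD S hS)
  have hfilter_sub : ∀ (a : Fin n) (D : Finset (Finset (Fin n))), (∀ S ∈ D, S.card = t) → ∀ c,
      D.filter (fun S => fA t a S = c) ⊆ (powersetCard t univ).filter (fun S => fA t a S = c) := by
    intro a D hD c S hS
    rw [mem_filter] at hS ⊢
    exact ⟨mem_powersetCard.2 ⟨subset_univ _, hD S hS.1⟩, hS.2⟩
  constructor
  · -- existence of an optimal pair
    have hchoice1 : ∀ c, ∃ T ⊆ (powersetCard t (univ : Finset (Fin n))).filter
        (fun S => fA t a1 S = c), #T = min (NN t a1 c) (NN t a2 c) := fun c =>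
      Finset.exists_subset_card_eq (min_le_left _ _)
    have hchoice2 : ∀ c, ∃ T ⊆ (powersetCard t (univ : Finset (Fin n))).filter
        (fun S => fA t a2 S = c), #T = min (NN t a1 c) (NN t a2 c) := fun c =>
      Finset.exists_subset_card_eq (min_le_right _ _)
    choose T1 hT1sub hT1card using hchoice1
    choose T2 hT2sub hT2card using hchoice2
    set D1 := (range (n - t + 1)).biUnion T1 with hD1
    set D2 := (range (n - t + 1)).biUnion T2 with hD2
    have hfa1 : ∀ c S, S ∈ T1 c → fA t a1 S = c := fun c S hS => (mem_filter.1 (hT1sub c hS)).2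
    have hfa2 : ∀ c S, S ∈ T2 c → fA t a2 S = c := fun c S hS => (mem_filter.1 (hT2sub c hS)).2
    have hmem1 : ∀ S ∈ D1, #S = t := by
      intro S hS
      obtain ⟨c, -, hSc⟩ := mem_biUnion.1 hS
      have h := hT1sub c hSc
      rw [mem_filter, mem_powersetCard] at h
      exact h.1.2
    have hmem2 : ∀ S ∈ D2, #S = t := by
      intro S hS
      obtain ⟨c, -, hSc⟩ := mem_biUnion.1 hS
      have h := hT2sub c hSc
      rw [mem_filter, mem_powersetCard] at h
      exact h.1.2
    have hdisj1 : ∀ x ∈ range (n - t + 1), ∀ y ∈ range (n - t + 1), x ≠ y →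
        Disjoint (T1 x) (T1 y) := fun x _ y _ hxy =>
      disjoint_left.2 (fun S hSx hSy => hxy (by rw [← hfa1 x S hSx, hfa1 y S hSy]))
    have hdisj2 : ∀ x ∈ range (n - t + 1), ∀ y ∈ range (n - t + 1), x ≠ y →
        Disjoint (T2 x) (T2 y) := fun x _ y _ hxy =>
      disjoint_left.2 (fun S hSx hSy => hxy (by rw [← hfa2 x S hSx, hfa2 y S hSy]))
    have hD1card : #D1 = M := by
      show #D1 = n.choose t - (n / 2 - 1).choose (t / 2) * (n / 2 - 1).choose ((t + 1) / 2)
      rw [← sumMin n t ht hn heven a1 a2 rfl rfl, hD1, card_biUnion hdisj1]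
      exact sum_congr rfl (fun c _ => hT1card c)
    have hD2card : #D2 = M := by
      show #D2 = n.choose t - (n / 2 - 1).choose (t / 2) * (n / 2 - 1).choose ((t + 1) / 2)
      rw [← sumMin n t ht hn heven a1 a2 rfl rfl, hD2, card_biUnion hdisj2]
      exact sum_congr rfl (fun c _ => hT2card c)
    have hfilter1 : ∀ c, c < n - t + 1 → D1.filter (fun S => fA t a1 S = c) = T1 c := by
      intro c hc
      ext S
      rw [mem_filter]
      constructor
      · rintro ⟨hSD, hfc⟩
        obtain ⟨c', -, hSc'⟩ := mem_biUnion.1 hSD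
        have h3 := hfa1 c' S hSc'
        rw [show c = c' from by omega]
        exact hSc'
      · intro hS
        exact ⟨mem_biUnion.2 ⟨c, mem_range.2 hc, hS⟩, hfa1 c S hS⟩
    have hfilter2 : ∀ c, c < n - t + 1 → D2.filter (fun S => fA t a2 S = c) = T2 c := by
      intro c hc
      ext S
      rw [mem_filter]
      constructor
      · rintro ⟨hSD, hfc⟩
        obtain ⟨c', -, hSc'⟩ := mem_biUnion.1 hSD
        have h3 := hfa2 c' S hSc'
        rw [show c = c' from by omega]
        exact hSc'
      · intro hS
        exact ⟨mem_biUnion.2 ⟨c, mem_range.2 hc, hS⟩, hfa2 c S hS⟩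
    have hfilter1' : ∀ c, ¬ c < n - t + 1 → D1.filter (fun S => fA t a1 S = c) = ∅ := by
      intro c hc
      apply filter_eq_empty_iff.2
      intro S hS h
      exact hc (by have := fA_le (a := a1) (hmem1 S hS); omega)
    have hfilter2' : ∀ c, ¬ c < n - t + 1 → D2.filter (fun S => fA t a2 S = c) = ∅ := by
      intro c hc
      apply filter_eq_empty_iff.2
      intro S hS h
      exact hc (by have := fA_le (a := a2) (hmem2 S hS); omega)
    have hmapeq : Multiset.map (fA t a1) D1.val = Multiset.map (fA t a2) D2.val := by
      apply Multiset.ext.2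
      intro c
      rw [count_map_fiber, count_map_fiber]
      by_cases hc : c < n - t + 1
      · rw [hfilter1 c hc, hfilter2 c hc, hT1card, hT2card]
      · rw [hfilter1' c hc, hfilter2' c hc]
    refine ⟨D1, D2, hmem1, hmem2, hD1card, hD2card, ?_⟩
    rw [hx1, hx2, hconv a1 D1 hmem1, hconv a2 D2 hmem2, hmapeq]
  · -- upper bound
    intro D1 D2 h1 h2 hcard heq
    rw [hx1, hconv a1 D1 h1, hx2, hconv a2 D2 h2] at heq
    have hmm := Multiset.map_injective (wordOf_injective (n - t)) heq
    have hcnt : ∀ c, #(D1.filter (fun S => fA t a1 S = c))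
        = #(D2.filter (fun S => fA t a2 S = c)) := by
      intro c
      rw [← count_map_fiber, ← count_map_fiber, hmm]
    have hfib : #D1 = ∑ c ∈ range (n - t + 1), #(D1.filter (fun S => fA t a1 S = c)) :=
      Finset.card_eq_sum_card_fiberwise (fun S hS => mem_range.2 (by
        have := fA_le (a := a1) (h1 S hS)
        omega))
    rw [hfib]
    show _ ≤ n.choose t - (n / 2 - 1).choose (t / 2) * (n / 2 - 1).choose ((t + 1) / 2)
    rw [← sumMin n t ht hn heven a1 a2 rfl rfl]
    apply Finset.sum_le_sum
    intro c hc
    apply le_min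
    · exact card_le_card (hfilter_sub a1 D1 h1 c)
    · rw [hcnt c]
      exact card_le_card (hfilter_sub a2 D2 h2 c)
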